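/- Let $w(x) = C e^{ax+b}$ with $C > 0$, $a, b \in \mathbb{R}$, and define the one-step transition density $p_1(x|y, \sigma) = k_\sigma(x;y)\, w(x) / \int_{\mathbb{R}} k_\sigma(z;y)\, w(z)\, dz$. Then for every $n \geq 1$ and all $x, y \in \mathbb{R}$, the $n$-step density $p_n(x|y,\sigma) = \int_{\mathbb{R}^{n-1}} \prod_{k=1}^n p_1(x_k|x_{k-1},\sigma)\, dx_1 \cdots dx_{n-1}$ (with $x_0 = y$, $x_n = x$) equals $p_1(x|y, \sqrt{n}\sigma)$. -/

import Mathlib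

open MeasureTheory Real

/-- Gaussian density with mean `m` and standard deviation `σ`, evaluated at `y`. -/
noncomputable def gauss (σ m y : ℝ) : ℝ :=
  (Real.sqrt (2 * Real.pi) * σ)⁻¹ * Real.exp (-(y - m) ^ 2 / (2 * σ ^ 2))

/-- Exponential weighting function. -/
noncomputable def wexp (C a b x : ℝ) : ℝ := C * Real.exp (a * x + b)

/-- One-step transition density: Gaussian kernel weighted by `wexp` and normalized.
`p1exp C a b σ y x` is the density of a step from `y` to `x`. -/
noncomputable def p1exp (C a b σ y x : ℝ) : ℝ :=
  gauss σ y x * wexp C a b x / ∫ z : ℝ, gauss σ y z * wexp C a b z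

/-- `pnexp C a b σ n y x` is the `(n+1)`-step density obtained by iterated
(Chapman–Kolmogorov) integration over the intermediate locations. -/
noncomputable def pnexp (C a b σ : ℝ) : ℕ → ℝ → ℝ → ℝ
  | 0 => fun y x => p1exp C a b σ y x
  | (m + 1) => fun y x => ∫ z : ℝ, pnexp C a b σ m y z * p1exp C a b σ z x

lemma int_quad (B c d : ℝ) (hB : 0 < B) :
    ∫ x : ℝ, Real.exp (-B * x ^ 2 + c * x + d)
      = Real.sqrt (π / B) * Real.exp (d + c ^ 2 / (4 * B)) := by
  have h (x : ℝ) : Real.exp (-B * x ^ 2 + c * x + d)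
      = Real.exp (-B * (x - c / (2 * B)) ^ 2) * Real.exp (d + c ^ 2 / (4 * B)) := by
    rw [← Real.exp_add]; congr 1; field_simp; ring
  simp_rw [h, integral_mul_const]
  rw [integral_sub_right_eq_self (fun x : ℝ => Real.exp (-B * x ^ 2)) (c / (2 * B)),
    integral_gaussian]

lemma Zval (C a b σ : ℝ) (hσ : 0 < σ) (y : ℝ) :
    (∫ z : ℝ, gauss σ y z * wexp C a b z)
      = C * Real.exp (a * y + b + a ^ 2 * σ ^ 2 / 2) := by
  have h (z : ℝ) : gauss σ y z * wexp C a b z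
      = ((Real.sqrt (2 * π) * σ)⁻¹ * C) *
        Real.exp (-(1 / (2 * σ ^ 2)) * z ^ 2 + (y / σ ^ 2 + a) * z
          + (-(y ^ 2 / (2 * σ ^ 2)) + b)) := by
    unfold gauss wexp
    rw [mul_mul_mul_comm, ← Real.exp_add]
    congr 2
    field_simp; ring
  simp_rw [h]
  rw [integral_const_mul, int_quad _ _ _ (by positivity)]
  have hs : Real.sqrt (π / (1 / (2 * σ ^ 2))) = Real.sqrt (2 * π) * σ := by
    rw [show π / (1 / (2 * σ ^ 2)) = (2 * π) * σ ^ 2 by field_simp,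
      Real.sqrt_mul (by positivity), Real.sqrt_sq hσ.le]
  have hexp : (-(y ^ 2 / (2 * σ ^ 2)) + b) + (y / σ ^ 2 + a) ^ 2 / (4 * (1 / (2 * σ ^ 2)))
      = a * y + b + a ^ 2 * σ ^ 2 / 2 := by
    field_simp; ring
  rw [hs, hexp]
  have h2 : Real.sqrt (2 * π) * σ ≠ 0 := by positivity
  field_simp

lemma p1exp_eq (C a b σ : ℝ) (hC : 0 < C) (hσ : 0 < σ) (y x : ℝ) :
    p1exp C a b σ y x = gauss σ (y + a * σ ^ 2) x := by
  unfold p1exp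
  rw [Zval C a b σ hσ y]
  unfold gauss wexp
  have key : Real.exp (-(x - y) ^ 2 / (2 * σ ^ 2)) * Real.exp (a * x + b)
      = Real.exp (-(x - (y + a * σ ^ 2)) ^ 2 / (2 * σ ^ 2)) *
        Real.exp (a * y + b + a ^ 2 * σ ^ 2 / 2) := by
    rw [← Real.exp_add, ← Real.exp_add]; congr 1; field_simp; ring
  have h3 : C * Real.exp (a * y + b + a ^ 2 * σ ^ 2 / 2) ≠ 0 := by positivity
  rw [mul_mul_mul_comm, key,
    show (Real.sqrt (2 * π) * σ)⁻¹ * C *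
        (Real.exp (-(x - (y + a * σ ^ 2)) ^ 2 / (2 * σ ^ 2)) *
          Real.exp (a * y + b + a ^ 2 * σ ^ 2 / 2))
      = ((Real.sqrt (2 * π) * σ)⁻¹ *
          Real.exp (-(x - (y + a * σ ^ 2)) ^ 2 / (2 * σ ^ 2))) *
        (C * Real.exp (a * y + b + a ^ 2 * σ ^ 2 / 2)) from by ring,
    mul_div_assoc, div_self h3, mul_one]

lemma gauss_conv (σ₁ σ₂ m x : ℝ) (h1 : 0 < σ₁) (h2 : 0 < σ₂) :
    (∫ z : ℝ, gauss σ₁ m z * gauss σ₂ z x)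
      = gauss (Real.sqrt (σ₁ ^ 2 + σ₂ ^ 2)) m x := by
  set s : ℝ := Real.sqrt (σ₁ ^ 2 + σ₂ ^ 2) with hs
  have hs0 : 0 < s := Real.sqrt_pos.mpr (by positivity)
  have hss : s ^ 2 = σ₁ ^ 2 + σ₂ ^ 2 := Real.sq_sqrt (by positivity)
  have h2π : Real.sqrt (2 * π) ^ 2 = 2 * π := Real.sq_sqrt (by positivity)
  have h2π0 : 0 < Real.sqrt (2 * π) := Real.sqrt_pos.mpr (by positivity)
  set B : ℝ := (σ₁ ^ 2 + σ₂ ^ 2) / (2 * σ₁ ^ 2 * σ₂ ^ 2) with hB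
  have hB0 : 0 < B := by positivity
  have h (z : ℝ) : gauss σ₁ m z * gauss σ₂ z x
      = ((Real.sqrt (2 * π) * σ₁)⁻¹ * (Real.sqrt (2 * π) * σ₂)⁻¹) *
        Real.exp (-B * z ^ 2 + (m / σ₁ ^ 2 + x / σ₂ ^ 2) * z
          + (-(m ^ 2 / (2 * σ₁ ^ 2)) - x ^ 2 / (2 * σ₂ ^ 2))) := by
    unfold gauss
    rw [mul_mul_mul_comm, ← Real.exp_add]
    congr 2
    rw [hB]; field_simp; ring
  simp_rw [h]
  rw [integral_const_mul, int_quad _ _ _ hB0]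
  have hπB : Real.sqrt (π / B) = Real.sqrt (2 * π) * (σ₁ * σ₂ / s) := by
    rw [show π / B = (2 * π) * (σ₁ * σ₂ / s) ^ 2 by
      rw [div_pow, hss, hB]; field_simp,
      Real.sqrt_mul (by positivity), Real.sqrt_sq (by positivity)]
  have hexp : (-(m ^ 2 / (2 * σ₁ ^ 2)) - x ^ 2 / (2 * σ₂ ^ 2))
      + (m / σ₁ ^ 2 + x / σ₂ ^ 2) ^ 2 / (4 * B)
      = -(x - m) ^ 2 / (2 * s ^ 2) := by
    rw [hss, hB]; field_simp; ring
  rw [hπB, hexp]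
  unfold gauss
  rw [← mul_assoc]
  congr 1
  field_simp

lemma gauss_shift (σ m c x : ℝ) : gauss σ (m + c) x = gauss σ m (x - c) := by
  unfold gauss; congr 2; ring

lemma pnexp_eq (C a b σ : ℝ) (hC : 0 < C) (hσ : 0 < σ) (m : ℕ) (y x : ℝ) :
    pnexp C a b σ m y x
      = gauss (Real.sqrt ((m : ℝ) + 1) * σ) (y + ((m : ℝ) + 1) * (a * σ ^ 2)) x := by
  induction m generalizing y x with
  | zero =>
      simp only [pnexp, p1exp_eq C a b σ hC hσ]
      norm_num
  | succ m ih =>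
      have hσm : 0 < Real.sqrt ((m : ℝ) + 1) * σ := by positivity
      simp only [pnexp]
      simp_rw [ih, p1exp_eq C a b σ hC hσ, gauss_shift σ _ (a * σ ^ 2)]
      rw [gauss_conv _ _ _ _ hσm hσ]
      rw [show (Real.sqrt ((m : ℝ) + 1) * σ) ^ 2 + σ ^ 2 = ((m : ℝ) + 1 + 1) * σ ^ 2 by
        rw [mul_pow, Real.sq_sqrt (by positivity)]; ring]
      rw [Real.sqrt_mul (by positivity), Real.sqrt_sq hσ.le]
      rw [← gauss_shift _ _ (a * σ ^ 2)]
      push_cast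
      ring_nf

theorem exp_weight_robust (C a b σ : ℝ) (hC : 0 < C) (hσ : 0 < σ) (n : ℕ) (hn : 1 ≤ n)
    (x y : ℝ) :
    pnexp C a b σ (n - 1) y x = p1exp C a b (Real.sqrt n * σ) y x := by
  obtain ⟨m, rfl⟩ : ∃ m, n = m + 1 := ⟨n - 1, by omega⟩
  have hσn : 0 < Real.sqrt ((m : ℝ) + 1) * σ := by positivity
  rw [show m + 1 - 1 = m from rfl, pnexp_eq C a b σ hC hσ m y x]
  rw [show ((m + 1 : ℕ) : ℝ) = (m : ℝ) + 1 by push_cast; ring]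
  rw [p1exp_eq C a b _ hC hσn y x]
  congr 1
  rw [mul_pow, Real.sq_sqrt (by positivity)]
  ring
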